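/- arXiv:1811.10325 — 3 statements merged into one kernel-verified Lean document; each statement's English description precedes it below -/
import Mathlib

section
/- Let ȳ > 0, Λ a positive integer, s ∈ [0, ȳ], and let φ_λ = (2λ−1)ȳ/Λ. For any nonnegative reals Δ_1,…,Δ_Λ with 0 ≤ Δ_λ ≤ ȳ/Λ for all λ and ∑_λ Δ_λ = s, one has ∑_λ φ_λ Δ_λ ≥ s². -/
/-- Every feasible choice of the PWL auxiliary variables overestimates the square:
if `0 ≤ Δ_λ ≤ ȳ/Λ`, `∑ Δ_λ = s`, `s ∈ [0, ȳ]`, then `∑ φ_λ Δ_λ ≥ s²`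
where `φ_λ = (2λ−1)ȳ/Λ`. -/
theorem pwl_feasible_ge_sq (ybar : ℝ) (hy : 0 < ybar) (Λ : ℕ) (hΛ : 0 < Λ)
    (s : ℝ) (hs : s ∈ Set.Icc 0 ybar) (Δ : ℕ → ℝ)
    (hΔ : ∀ l ∈ Finset.Icc 1 Λ, 0 ≤ Δ l ∧ Δ l ≤ ybar / Λ)
    (hsum : ∑ l ∈ Finset.Icc 1 Λ, Δ l = s) :
    s ^ 2 ≤ ∑ l ∈ Finset.Icc 1 Λ, (2 * (l : ℝ) - 1) * ybar / Λ * Δ l := by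
  set c : ℝ := ybar / Λ with hc
  have hcpos : 0 < c := div_pos hy (by exact_mod_cast hΛ)
  set P : ℕ → ℝ := fun k => ∑ l ∈ Finset.Icc 1 k, Δ l with hP
  have hPub : ∀ k, k ≤ Λ → P k ≤ k * c := by
    intro k hk
    have : P k ≤ ∑ l ∈ Finset.Icc 1 k, c := by
      apply Finset.sum_le_sum
      intro l hl
      exact (hΔ l (Finset.mem_Icc.mpr ⟨(Finset.mem_Icc.mp hl).1,
        le_trans (Finset.mem_Icc.mp hl).2 hk⟩)).2
    simpa [Nat.card_Icc, mul_comm] using this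
  have key : ∀ l ∈ Finset.Icc 1 Λ,
      P l ^ 2 - P (l - 1) ^ 2 ≤ (2 * (l : ℝ) - 1) * ybar / Λ * Δ l := by
    intro l hl
    obtain ⟨hl1, hlΛ⟩ := Finset.mem_Icc.mp hl
    have hΔl := hΔ l hl
    have hPl : P l = P (l - 1) + Δ l := by
      have : l = (l - 1) + 1 := (Nat.succ_pred_eq_of_pos hl1).symm
      rw [this]
      simpa [hP] using Finset.sum_Icc_succ_top (Nat.le_add_left 1 (l - 1)) Δ
    have hP0 : 0 ≤ P (l - 1) :=
      Finset.sum_nonneg fun j hj => (hΔ j (Finset.mem_Icc.mpr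
        ⟨(Finset.mem_Icc.mp hj).1, le_trans (Finset.mem_Icc.mp hj).2
          (le_trans (Nat.sub_le l 1) hlΛ)⟩)).1
    have hPle : P (l - 1) ≤ ((l : ℝ) - 1) * c := by
      have h := hPub (l - 1) (le_trans (Nat.sub_le l 1) hlΛ)
      have : ((l - 1 : ℕ) : ℝ) = (l : ℝ) - 1 := by
        simp [Nat.cast_sub hl1]
      rwa [this] at h
    have hphi : (2 * (l : ℝ) - 1) * ybar / Λ * Δ l = (2 * (l : ℝ) - 1) * c * Δ l := by
      rw [hc]; ring
    rw [hphi, hPl]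
    have h1 : Δ l * Δ l ≤ c * Δ l := mul_le_mul_of_nonneg_right hΔl.2 hΔl.1
    have h2 : 2 * P (l - 1) * Δ l ≤ 2 * (((l : ℝ) - 1) * c) * Δ l := by
      apply mul_le_mul_of_nonneg_right _ hΔl.1
      linarith
    nlinarith [h1, h2]
  have tel0 : ∀ n : ℕ, ∑ l ∈ Finset.Icc 1 n, (P l ^ 2 - P (l - 1) ^ 2)
      = P n ^ 2 - P 0 ^ 2 := by
    intro n
    induction n with
    | zero => simp
    | succ m ih =>
      rw [Finset.sum_Icc_succ_top (Nat.le_add_left 1 m), ih]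
      simp
  have tel : ∑ l ∈ Finset.Icc 1 Λ, (P l ^ 2 - P (l - 1) ^ 2) = s ^ 2 := by
    rw [tel0]
    have hP0 : P 0 = 0 := by simp [hP]
    have hPΛ : P Λ = s := hsum
    rw [hP0, hPΛ]; ring
  calc s ^ 2 = ∑ l ∈ Finset.Icc 1 Λ, (P l ^ 2 - P (l - 1) ^ 2) := tel.symm
    _ ≤ _ := Finset.sum_le_sum key
end

section
/- With the setup of the iterative sequence ȳ_{g+1} = √(F_{ȳ_g}(s*)) for fixed s* > 0 and s* ≤ ȳ_0, the limit L = lim ȳ_g satisfies L² = F_L(s*), and consequently s* ≤ L and L² − (s*)² ≤ L²/(4Λ²), so L ≤ s*/√(1 − 1/(4Λ²)). -/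
noncomputable def pwl (ybar : ℝ) (Λ : ℕ) (s : ℝ) : ℝ :=
  let w := ybar / Λ
  let k : ℤ := ⌊s / w⌋
  (k : ℝ) ^ 2 * w ^ 2 + (2 * (k : ℝ) + 1) * w * (s - (k : ℝ) * w)

lemma pwl_eq (ybar s : ℝ) (Λ : ℕ) (hΛ : 0 < Λ) (hy : ybar ≠ 0) :
    pwl ybar Λ s = s ^ 2 +
      Int.fract (s / (ybar / Λ)) * (1 - Int.fract (s / (ybar / Λ))) * (ybar / Λ) ^ 2 := by
  have hw : (ybar / Λ) ≠ 0 := by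
    have : (Λ : ℝ) ≠ 0 := Nat.cast_ne_zero.mpr hΛ.ne'
    exact div_ne_zero hy this
  set w := ybar / Λ with hwdef
  set u := s / w with hudef
  have hsu : s = u * w := (div_mul_cancel₀ s hw).symm
  show ((⌊s / w⌋ : ℝ)) ^ 2 * w ^ 2 + (2 * (⌊s / w⌋ : ℝ) + 1) * w * (s - (⌊s / w⌋ : ℝ) * w) = _
  rw [Int.fract, ← hudef]
  rw [hsu]
  ring

lemma fract_mul_nonneg (x : ℝ) : 0 ≤ Int.fract x * (1 - Int.fract x) :=
  mul_nonneg (Int.fract_nonneg x) (by linarith [Int.fract_lt_one x])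

lemma fract_mul_le (x : ℝ) : Int.fract x * (1 - Int.fract x) ≤ 1 / 4 := by
  nlinarith [sq_nonneg (Int.fract x - 1 / 2)]

lemma cont_fract_mul : Continuous fun x : ℝ => Int.fract x * (1 - Int.fract x) := by
  have : Continuous ((fun t : ℝ => t * (1 - t)) ∘ Int.fract) := by
    apply ContinuousOn.comp_fract''
    · exact (continuous_id.mul (continuous_const.sub continuous_id)).continuousOn
    · norm_num
  exact this

/-- The limit `L` of the renewal sequence satisfies `L² = F_L(s*)`, `s* ≤ L`,
`L² − (s*)² ≤ L²/(4Λ²)`, and `L ≤ s*/√(1 − 1/(4Λ²))`. -/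
theorem renewal_seq_limit (Λ : ℕ) (hΛ : 0 < Λ) (sstar : ℝ) (hs : 0 < sstar)
    (y : ℕ → ℝ) (h0 : sstar ≤ y 0)
    (hrec : ∀ g, y (g + 1) = Real.sqrt (pwl (y g) Λ sstar))
    (L : ℝ) (hL : Filter.Tendsto y Filter.atTop (nhds L)) :
    L ^ 2 = pwl L Λ sstar ∧ sstar ≤ L ∧
    L ^ 2 - sstar ^ 2 ≤ L ^ 2 / (4 * (Λ : ℝ) ^ 2) ∧
    L ≤ sstar / Real.sqrt (1 - 1 / (4 * (Λ : ℝ) ^ 2)) := by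
  have hΛR : (0 : ℝ) < (Λ : ℝ) := Nat.cast_pos.mpr hΛ
  -- every term is ≥ sstar
  have hyge : ∀ g, sstar ≤ y g := by
    intro g
    induction g with
    | zero => exact h0
    | succ n ih =>
      have hyn : y n ≠ 0 := (lt_of_lt_of_le hs ih).ne'
      have hp : sstar ^ 2 ≤ pwl (y n) Λ sstar := by
        rw [pwl_eq _ _ _ hΛ hyn]
        have := fract_mul_nonneg (sstar / (y n / Λ))
        nlinarith [sq_nonneg (y n / Λ)]
      rw [hrec n]
      calc sstar = Real.sqrt (sstar ^ 2) := (Real.sqrt_sq hs.le).symm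
        _ ≤ _ := Real.sqrt_le_sqrt hp
  have hsL : sstar ≤ L := ge_of_tendsto' hL hyge
  have hLpos : 0 < L := lt_of_lt_of_le hs hsL
  -- continuity of pwl · Λ sstar at L
  have hcont : ContinuousAt (fun ybar => pwl ybar Λ sstar) L := by
    have hg : ContinuousAt (fun ybar : ℝ => sstar ^ 2 +
        Int.fract (sstar / (ybar / Λ)) * (1 - Int.fract (sstar / (ybar / Λ))) * (ybar / Λ) ^ 2) L := by
      have hw : ContinuousAt (fun x : ℝ => x / (Λ : ℝ)) L :=
        continuousAt_id.div continuousAt_const hΛR.ne'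
      have hwne : L / (Λ : ℝ) ≠ 0 := div_ne_zero hLpos.ne' hΛR.ne'
      have hdiv : ContinuousAt (fun x : ℝ => sstar / (x / (Λ : ℝ))) L :=
        continuousAt_const.div hw hwne
      exact continuousAt_const.add ((cont_fract_mul.continuousAt.comp hdiv).mul (hw.pow 2))
    apply hg.congr
    have hmem : {x : ℝ | x ≠ 0} ∈ nhds L := isOpen_ne.mem_nhds hLpos.ne'
    filter_upwards [hmem] with x hx
    exact (pwl_eq x sstar Λ hΛ hx).symm
  -- limit equation
  have h1 : L ^ 2 = pwl L Λ sstar := by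
    have hA : Filter.Tendsto (fun g => pwl (y g) Λ sstar) Filter.atTop
        (nhds (pwl L Λ sstar)) := hcont.tendsto.comp hL
    have hB : Filter.Tendsto (fun g => (y (g + 1)) ^ 2) Filter.atTop (nhds (L ^ 2)) :=
      ((hL.comp (Filter.tendsto_add_atTop_nat 1)).pow 2)
    have heq : ∀ g, (y (g + 1)) ^ 2 = pwl (y g) Λ sstar := by
      intro g
      have hyg : y g ≠ 0 := (lt_of_lt_of_le hs (hyge g)).ne'
      have hp : 0 ≤ pwl (y g) Λ sstar := by
        rw [pwl_eq _ _ _ hΛ hyg]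
        have := fract_mul_nonneg (sstar / (y g / Λ))
        nlinarith [sq_nonneg (y g / Λ)]
      rw [hrec g, Real.sq_sqrt hp]
    exact tendsto_nhds_unique (hB.congr (fun g => heq g)) hA
  -- the bound
  have h3 : L ^ 2 - sstar ^ 2 ≤ L ^ 2 / (4 * (Λ : ℝ) ^ 2) := by
    rw [pwl_eq _ _ _ hΛ hLpos.ne'] at h1
    have hb := fract_mul_le (sstar / (L / Λ))
    have hnn := fract_mul_nonneg (sstar / (L / Λ))
    have hw2 : (L / Λ) ^ 2 = L ^ 2 / (Λ : ℝ) ^ 2 := by rw [div_pow]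
    rw [hw2] at h1
    have hB : (0 : ℝ) < (Λ : ℝ) ^ 2 := by positivity
    have h1' : (L ^ 2 - sstar ^ 2) * (Λ : ℝ) ^ 2 =
        Int.fract (sstar / (L / Λ)) * (1 - Int.fract (sstar / (L / Λ))) * L ^ 2 := by
      field_simp at h1 ⊢
      linarith
    rw [le_div_iff₀ (by positivity : (0 : ℝ) < 4 * (Λ : ℝ) ^ 2)]
    nlinarith [mul_le_mul_of_nonneg_right hb (sq_nonneg L)]
  have hc : (0 : ℝ) < 1 - 1 / (4 * (Λ : ℝ) ^ 2) := by
    have : (1 : ℝ) ≤ (Λ : ℝ) := by exact_mod_cast hΛ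
    have h4 : (1 : ℝ) ≤ (Λ : ℝ) ^ 2 := by nlinarith
    rw [sub_pos]
    rw [div_lt_one (by positivity)]
    nlinarith
  have h4 : L ≤ sstar / Real.sqrt (1 - 1 / (4 * (Λ : ℝ) ^ 2)) := by
    have hkey : L ^ 2 * (1 - 1 / (4 * (Λ : ℝ) ^ 2)) ≤ sstar ^ 2 := by
      have hexp : L ^ 2 * (1 - 1 / (4 * (Λ : ℝ) ^ 2)) =
          L ^ 2 - L ^ 2 / (4 * (Λ : ℝ) ^ 2) := by ring
      linarith
    have hsqrt : L * Real.sqrt (1 - 1 / (4 * (Λ : ℝ) ^ 2)) ≤ sstar := by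
      have : Real.sqrt (L ^ 2 * (1 - 1 / (4 * (Λ : ℝ) ^ 2))) ≤ Real.sqrt (sstar ^ 2) :=
        Real.sqrt_le_sqrt hkey
      rwa [Real.sqrt_mul (sq_nonneg L), Real.sqrt_sq hLpos.le, Real.sqrt_sq hs.le] at this
    rw [le_div_iff₀ (Real.sqrt_pos.mpr hc)]
    exact hsqrt
  exact ⟨h1, hsL, h3, h4⟩
end

section
/- Let ȳ > 0, Λ a positive integer, and φ_λ = (2λ−1)ȳ/Λ. For s ∈ ℝ with |s| ≤ ȳ, suppose (s⁺, s⁻, Δ_1, …, Δ_Λ) satisfy s = s⁺ − s⁻, s⁺ + s⁻ = ∑_λ Δ_λ, s⁺, s⁻ ≥ 0, and 0 ≤ Δ_λ ≤ ȳ/Λ. Then ∑_λ φ_λ Δ_λ ≥ s², i.e. the full PWL constraint system from equations (27)–(32) always overestimates the square, even when s⁺ + s⁻ > |s|. -/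
/-- The full PWL constraint system (27)–(32) always overestimates the square:
if `s = s⁺ − s⁻`, `s⁺ + s⁻ = ∑ Δ_λ`, `s⁺, s⁻ ≥ 0`, `0 ≤ Δ_λ ≤ ȳ/Λ`, and `|s| ≤ ȳ`,
then `∑ φ_λ Δ_λ ≥ s²` with `φ_λ = (2λ−1)ȳ/Λ`. -/
theorem pwl_system_ge_sq (ybar : ℝ) (hy : 0 < ybar) (Λ : ℕ) (hΛ : 0 < Λ)
    (s p m : ℝ) (hs : |s| ≤ ybar) (hp : 0 ≤ p) (hm : 0 ≤ m)
    (hsplit : s = p - m) (Δ : ℕ → ℝ)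
    (hΔ : ∀ l ∈ Finset.Icc 1 Λ, 0 ≤ Δ l ∧ Δ l ≤ ybar / Λ)
    (hsum : p + m = ∑ l ∈ Finset.Icc 1 Λ, Δ l) :
    s ^ 2 ≤ ∑ l ∈ Finset.Icc 1 Λ, (2 * (l : ℝ) - 1) * ybar / Λ * Δ l := by
  set h : ℝ := ybar / Λ with hh
  have hhpos : 0 < h := div_pos hy (by exact_mod_cast hΛ)
  set S : ℕ → ℝ := fun k => ∑ l ∈ Finset.Icc 1 k, Δ l with hS
  -- partial sum bound
  have hSle : ∀ k, k ≤ Λ → S k ≤ k * h := by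
    intro k hk
    have : S k ≤ (Finset.Icc 1 k).card • h := by
      apply Finset.sum_le_card_nsmul
      intro l hl
      exact (hΔ l (Finset.mem_Icc.mpr ⟨(Finset.mem_Icc.mp hl).1,
        le_trans (Finset.mem_Icc.mp hl).2 hk⟩)).2
    simpa [Nat.card_Icc, nsmul_eq_mul] using this
  have hSsucc : ∀ i, S (i + 1) = S i + Δ (i + 1) := by
    intro i
    simp only [hS]
    rw [Finset.sum_Icc_succ_top (by omega : 1 ≤ i + 1)]
  -- step 1 : s^2 ≤ (p+m)^2
  have h1 : s ^ 2 ≤ (p + m) ^ 2 := by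
    have habs : |s| ≤ p + m := by
      rw [hsplit]
      calc |p - m| ≤ |p| + |m| := abs_sub p m
        _ = p + m := by rw [abs_of_nonneg hp, abs_of_nonneg hm]
    calc s ^ 2 = |s| ^ 2 := (sq_abs s).symm
      _ ≤ (p + m) ^ 2 := by
          apply pow_le_pow_left₀ (abs_nonneg s) habs
  have h2 : (p + m) ^ 2 = S Λ ^ 2 := by rw [hsum]
  -- telescoping
  have h3 : S Λ ^ 2 = ∑ i ∈ Finset.range Λ, (S (i + 1) ^ 2 - S i ^ 2) := by
    rw [Finset.sum_range_sub (fun k => S k ^ 2)]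
    simp [hS]
  -- per-term bound
  have h4 : ∑ i ∈ Finset.range Λ, (S (i + 1) ^ 2 - S i ^ 2)
      ≤ ∑ i ∈ Finset.range Λ, (2 * ((i : ℝ) + 1) - 1) * h * Δ (i + 1) := by
    apply Finset.sum_le_sum
    intro i hi
    have hiΛ : i + 1 ≤ Λ := Nat.succ_le_of_lt (Finset.mem_range.mp hi)
    obtain ⟨hΔ0, hΔh⟩ := hΔ (i + 1) (Finset.mem_Icc.mpr ⟨by omega, hiΛ⟩)
    have hSi : S i ≤ i * h := hSle i (by omega)
    have key : S (i + 1) ^ 2 - S i ^ 2 = Δ (i + 1) * (2 * S i + Δ (i + 1)) := by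
      rw [hSsucc]; ring
    rw [key]
    have : Δ (i + 1) * (2 * S i + Δ (i + 1)) ≤ Δ (i + 1) * (2 * (i * h) + h) := by
      apply mul_le_mul_of_nonneg_left _ hΔ0
      have := hΔh
      linarith
    calc Δ (i + 1) * (2 * S i + Δ (i + 1)) ≤ Δ (i + 1) * (2 * (i * h) + h) := this
      _ = (2 * ((i : ℝ) + 1) - 1) * h * Δ (i + 1) := by ring
  -- reindex target sum
  have h5 : ∑ l ∈ Finset.Icc 1 Λ, (2 * (l : ℝ) - 1) * ybar / Λ * Δ l
      = ∑ i ∈ Finset.range Λ, (2 * ((i : ℝ) + 1) - 1) * h * Δ (i + 1) := by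
    rw [show Finset.Icc 1 Λ = Finset.Ico 1 (Λ + 1) by rw [Finset.Ico_add_one_right_eq_Icc],
      Finset.sum_Ico_eq_sum_range]
    apply Finset.sum_congr (by simp)
    intro i hi
    rw [add_comm 1 i, hh]
    push_cast
    ring
  rw [h5]
  linarith
end
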